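/- arXiv:2011.05651 — 2 statements merged into one kernel-verified Lean document; each statement's English description precedes it below -/
import Mathlib

section
/- Let T > 0, C > 0, and let x, x̄ : [0,T] → ℝ³ be two C¹ curves satisfying the differential inequality |d/dt |x(t) − x̄(t)|²| ≤ C(t)·|x(t) − x̄(t)|²·(1 − log(|x(t) − x̄(t)|²)) whenever 0 < |x(t) − x̄(t)| ≤ 1, where C(·) ≥ 0 is integrable on [0,T] with ∫₀^T C(τ)dτ = K. If |x(0) − x̄(0)| ≤ 1 then for all t ∈ [0,T] with |x(t) − x̄(t)| ≤ 1 one has |x(t) − x̄(t)| ≤ e·|x(0) − x̄(0)|^{exp(−K)}; in particular the separation at time t is bounded by a constant times a positive power (namely e^{−K}) of the initial separation. -/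
open Real MeasureTheory Set Topology Filter

theorem stmt5_core (T K : ℝ)
    (x xb : ℝ → EuclideanSpace ℝ (Fin 3)) (C : ℝ → ℝ)
    (hx : ContDiff ℝ 1 x) (hxb : ContDiff ℝ 1 xb)
    (hC0 : ∀ t ∈ Set.Icc (0:ℝ) T, 0 ≤ C t)
    (hCint : MeasureTheory.IntegrableOn C (Set.Icc (0:ℝ) T))
    (hK : ∫ τ in Set.Icc (0:ℝ) T, C τ = K)
    (hineq : ∀ t ∈ Set.Icc (0:ℝ) T, 0 < ‖x t - xb t‖ → ‖x t - xb t‖ ≤ 1 →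
      |deriv (fun τ => ‖x τ - xb τ‖ ^ 2) t| ≤
        C t * ‖x t - xb t‖ ^ 2 * (1 - Real.log (‖x t - xb t‖ ^ 2)))
    (a b : ℝ) (ha : 0 ≤ a) (hab : a ≤ b) (hbT : b ≤ T)
    (hpos : ∀ τ ∈ Set.Icc a b, 0 < ‖x τ - xb τ‖ ∧ ‖x τ - xb τ‖ ≤ 1) :
    ‖x b - xb b‖ ≤ Real.exp 1 * ‖x a - xb a‖ ^ Real.exp (-K) := by
  set φ : ℝ → ℝ := fun τ => ‖x τ - xb τ‖ ^ 2 with hφdef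
  have hφ : ContDiff ℝ 1 φ := (hx.sub hxb).norm_sq ℝ
  have hφd : Differentiable ℝ φ := hφ.differentiable one_ne_zero
  have hφc : Continuous φ := hφd.continuous
  have hφ' : Continuous (deriv φ) := hφ.continuous_deriv le_rfl
  -- basic facts on Icc a b
  have hsub : Set.Icc a b ⊆ Set.Icc (0:ℝ) T := Set.Icc_subset_Icc ha hbT
  have hφpos : ∀ τ ∈ Set.Icc a b, 0 < φ τ := fun τ hτ => pow_pos (hpos τ hτ).1 2
  have hφle1 : ∀ τ ∈ Set.Icc a b, φ τ ≤ 1 := fun τ hτ =>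
    pow_le_one₀ (norm_nonneg _) (hpos τ hτ).2
  have hψpos : ∀ τ ∈ Set.Icc a b, 0 < 1 - Real.log (φ τ) := by
    intro τ hτ
    have : Real.log (φ τ) ≤ 0 := Real.log_nonpos (hφpos τ hτ).le (hφle1 τ hτ)
    linarith
  set h : ℝ → ℝ := fun τ => Real.log (1 - Real.log (φ τ)) with hhdef
  have hdiff : ∀ τ ∈ Set.Icc a b, DifferentiableAt ℝ h τ := by
    intro τ hτ
    exact (((hφd τ).log (hφpos τ hτ).ne').const_sub 1).log (hψpos τ hτ).ne'
  have hderiv : ∀ τ ∈ Set.Icc a b,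
      deriv h τ = -(deriv φ τ / φ τ) / (1 - Real.log (φ τ)) := by
    intro τ hτ
    have h1 : DifferentiableAt ℝ (fun s => Real.log (φ s)) τ :=
      (hφd τ).log (hφpos τ hτ).ne'
    have h2 : DifferentiableAt ℝ (fun s => 1 - Real.log (φ s)) τ := h1.const_sub 1
    rw [hhdef]
    rw [deriv.log h2 (hψpos τ hτ).ne']
    rw [deriv_const_sub, deriv.log (hφd τ) (hφpos τ hτ).ne']
  -- the formula function
  set g : ℝ → ℝ := fun τ => -(deriv φ τ / φ τ) / (1 - Real.log (φ τ)) with hgdef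
  have hgcont : ContinuousOn g (Set.Icc a b) := by
    intro τ hτ
    apply ContinuousAt.continuousWithinAt
    have hlogc : ContinuousAt (fun s => Real.log (φ s)) τ :=
      (Real.continuousAt_log (hφpos τ hτ).ne').comp hφc.continuousAt
    exact (((hφ'.continuousAt.div hφc.continuousAt (hφpos τ hτ).ne')).neg).div
      (continuousAt_const.sub hlogc) (hψpos τ hτ).ne'
  have hintg : IntervalIntegrable (deriv h) volume a b := by
    rw [intervalIntegrable_iff_integrableOn_Icc_of_le hab]
    exact ((hgcont.integrableOn_Icc).congr_fun
      (fun τ hτ => (hderiv τ hτ).symm) measurableSet_Icc)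
  have hintC : IntegrableOn C (Set.Icc a b) := hCint.mono_set hsub
  have hintnegC : IntervalIntegrable (fun τ => -C τ) volume a b := by
    have : IntervalIntegrable C volume a b := by
      apply MeasureTheory.IntegrableOn.intervalIntegrable
      rwa [Set.uIcc_of_le hab]
    exact this.neg
  -- FTC
  have hftc : ∫ s in a..b, deriv h s = h b - h a := by
    apply intervalIntegral.integral_deriv_eq_sub
    · intro τ hτ; rw [Set.uIcc_of_le hab] at hτ; exact hdiff τ hτ
    · exact hintg
  -- pointwise bound
  have hbound : ∀ τ ∈ Set.Icc a b, -C τ ≤ deriv h τ := by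
    intro τ hτ
    have hi := hineq τ (hsub hτ) (hpos τ hτ).1 (hpos τ hτ).2
    have hψ := hψpos τ hτ
    have hφp := hφpos τ hτ
    rw [hderiv τ hτ]
    have h2 : deriv φ τ ≤ C τ * φ τ * (1 - Real.log (φ τ)) := (abs_le.mp hi).2
    rw [le_div_iff₀ hψ]
    have h3 : deriv φ τ / φ τ ≤ C τ * (1 - Real.log (φ τ)) := by
      rw [div_le_iff₀ hφp]; nlinarith
    linarith
  -- integral comparison
  have hCab_le : ∫ s in a..b, C s ≤ K := by
    rw [intervalIntegral.integral_of_le hab, ← hK]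
    apply MeasureTheory.setIntegral_mono_set hCint
    · exact (MeasureTheory.ae_restrict_mem measurableSet_Icc).mono fun τ hτ => hC0 τ hτ
    · exact (Set.Ioc_subset_Icc_self.trans hsub).eventuallyLE
  have h1 : -K ≤ h b - h a := by
    rw [← hftc]
    calc -K ≤ -∫ s in a..b, C s := by linarith
      _ = ∫ s in a..b, -C s := (intervalIntegral.integral_neg).symm
      _ ≤ ∫ s in a..b, deriv h s :=
        intervalIntegral.integral_mono_on hab hintnegC hintg hbound
  -- unwrap the logs
  have hain : a ∈ Set.Icc a b := ⟨le_rfl, hab⟩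
  have hbin : b ∈ Set.Icc a b := ⟨hab, le_rfl⟩
  have hψa := hψpos a hain
  have hψb := hψpos b hbin
  have hexp : (1 - Real.log (φ a)) * Real.exp (-K) ≤ 1 - Real.log (φ b) := by
    have h2 : Real.exp (h a + (-K)) ≤ Real.exp (h b) := Real.exp_le_exp.mpr (by linarith)
    rw [Real.exp_add] at h2
    have ea : Real.exp (h a) = 1 - Real.log (φ a) := Real.exp_log hψa
    have eb : Real.exp (h b) = 1 - Real.log (φ b) := Real.exp_log hψb
    rw [ea, eb] at h2
    exact h2
  have hy : 0 < Real.exp (-K) := Real.exp_pos _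
  have h3 : Real.log (φ b) ≤ 1 + Real.exp (-K) * Real.log (φ a) := by nlinarith
  -- convert to norms
  have hNa : 0 < ‖x a - xb a‖ := (hpos a hain).1
  have hNb : 0 < ‖x b - xb b‖ := (hpos b hbin).1
  have hla : Real.log (φ a) = 2 * Real.log (‖x a - xb a‖) := by
    show Real.log (‖x a - xb a‖ ^ 2) = 2 * Real.log (‖x a - xb a‖)
    rw [Real.log_pow]; norm_num
  have hlb : Real.log (φ b) = 2 * Real.log (‖x b - xb b‖) := by
    show Real.log (‖x b - xb b‖ ^ 2) = 2 * Real.log (‖x b - xb b‖)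
    rw [Real.log_pow]; norm_num
  rw [← Real.log_le_log_iff hNb (by positivity)]
  rw [Real.log_mul (Real.exp_pos 1).ne' (by positivity), Real.log_exp,
    Real.log_rpow hNa]
  rw [hla, hlb] at h3
  linarith

/-- Osgood/Gronwall estimate: curves satisfying the log-type differential inequality
separate at most like a power `exp(-K)` of the initial separation. -/
theorem stmt5 (T K : ℝ) (hT : 0 < T)
    (x xb : ℝ → EuclideanSpace ℝ (Fin 3)) (C : ℝ → ℝ)
    (hx : ContDiff ℝ 1 x) (hxb : ContDiff ℝ 1 xb)
    (hC0 : ∀ t ∈ Set.Icc (0:ℝ) T, 0 ≤ C t)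
    (hCint : MeasureTheory.IntegrableOn C (Set.Icc (0:ℝ) T))
    (hK : ∫ τ in Set.Icc (0:ℝ) T, C τ = K)
    (hineq : ∀ t ∈ Set.Icc (0:ℝ) T, 0 < ‖x t - xb t‖ → ‖x t - xb t‖ ≤ 1 →
      |deriv (fun τ => ‖x τ - xb τ‖ ^ 2) t| ≤
        C t * ‖x t - xb t‖ ^ 2 * (1 - Real.log (‖x t - xb t‖ ^ 2)))
    (h0 : ‖x 0 - xb 0‖ ≤ 1) :
    ∀ t ∈ Set.Icc (0:ℝ) T, ‖x t - xb t‖ ≤ 1 →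
      ‖x t - xb t‖ ≤ Real.exp 1 * ‖x 0 - xb 0‖ ^ Real.exp (-K) := by
  intro t ht hNt1
  set y := Real.exp (-K) with hydef
  have hy : 0 < y := Real.exp_pos _
  have hNcont : Continuous (fun τ => ‖x τ - xb τ‖) :=
    ((hx.continuous).sub (hxb.continuous)).norm
  -- Claim (★)
  have star : ∀ b ∈ Set.Icc (0:ℝ) t, (∀ τ ∈ Set.Icc (0:ℝ) b, ‖x τ - xb τ‖ ≤ 1) →
      ‖x b - xb b‖ ≤ Real.exp 1 * ‖x 0 - xb 0‖ ^ y := by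
    intro b hb hle
    rcases eq_or_lt_of_le (norm_nonneg (x b - xb b)) with hb0 | hbpos
    · rw [← hb0]; positivity
    · by_cases hz : ∃ s ∈ Set.Icc (0:ℝ) b, ‖x s - xb s‖ = 0
      · -- zero set nonempty; show this is impossible (N b > 0)
        exfalso
        obtain ⟨s0, hs0mem, hs00⟩ := hz
        set Z := Set.Icc (0:ℝ) b ∩ {s | ‖x s - xb s‖ = 0} with hZdef
        have hZcomp : IsCompact Z :=
          isCompact_Icc.inter_right (isClosed_eq hNcont continuous_const)
        have hZne : Z.Nonempty := ⟨s0, hs0mem, hs00⟩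
        set s := sSup Z with hsdef
        have hsZ : s ∈ Z := hZcomp.sSup_mem hZne
        have hNs0 : ‖x s - xb s‖ = 0 := hsZ.2
        have hsb : s < b := by
          rcases lt_or_eq_of_le hsZ.1.2 with h | h
          · exact h
          · exfalso; rw [h] at hNs0; rw [hNs0] at hbpos; exact lt_irrefl _ hbpos
        have hposint : ∀ a ∈ Set.Ioc s b, ∀ τ ∈ Set.Icc a b, 0 < ‖x τ - xb τ‖ := by
          intro a hma τ hτ
          by_contra hc
          push_neg at hc
          have hτ0 : ‖x τ - xb τ‖ = 0 := le_antisymm hc (norm_nonneg _)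
          have h0a : (0:ℝ) ≤ a := le_trans hsZ.1.1 hma.1.le
          have hτZ : τ ∈ Z := ⟨⟨le_trans h0a hτ.1, hτ.2⟩, hτ0⟩
          have := le_csSup hZcomp.bddAbove hτZ
          have := hma.1
          have := hτ.1
          linarith
        set δ := (‖x b - xb b‖ / Real.exp 1) ^ (1/y) with hδdef
        have hδpos : 0 < δ :=
          Real.rpow_pos_of_pos (div_pos hbpos (Real.exp_pos 1)) _
        have hNa_ge : ∀ a ∈ Set.Ioc s b, δ ≤ ‖x a - xb a‖ := by
          intro a hma
          have h0a : (0:ℝ) ≤ a := le_trans hsZ.1.1 hma.1.le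
          have hposab : ∀ τ ∈ Set.Icc a b, 0 < ‖x τ - xb τ‖ ∧ ‖x τ - xb τ‖ ≤ 1 :=
            fun τ hτ => ⟨hposint a hma τ hτ,
              hle τ ⟨le_trans h0a hτ.1, hτ.2⟩⟩
          have hcore := stmt5_core T K x xb C hx hxb hC0 hCint hK hineq a b
            h0a hma.2 (le_trans hb.2 ht.2) hposab
          have h1 : ‖x b - xb b‖ / Real.exp 1 ≤ ‖x a - xb a‖ ^ y := by
            rw [div_le_iff₀ (Real.exp_pos 1)]
            nlinarith [Real.rpow_nonneg (norm_nonneg (x a - xb a)) y, Real.exp_pos 1]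
          calc δ ≤ (‖x a - xb a‖ ^ y) ^ (1/y) :=
                Real.rpow_le_rpow (by positivity) h1 (by positivity)
            _ = ‖x a - xb a‖ := by
                rw [← Real.rpow_mul (norm_nonneg _), mul_one_div, div_self hy.ne',
                  Real.rpow_one]
        have hδle : δ ≤ ‖x s - xb s‖ := by
          refine ge_of_tendsto ((hNcont.tendsto s).mono_left
            (nhdsWithin_le_nhds : 𝓝[>] s ≤ 𝓝 s)) ?_
          exact Filter.eventually_of_mem (Ioc_mem_nhdsGT_of_mem ⟨le_rfl, hsb⟩) hNa_ge
        rw [hNs0] at hδle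
        exact absurd hδle (not_le.mpr hδpos)
      · push_neg at hz
        have hposall : ∀ τ ∈ Set.Icc (0:ℝ) b, 0 < ‖x τ - xb τ‖ ∧ ‖x τ - xb τ‖ ≤ 1 :=
          fun τ hτ => ⟨(norm_nonneg _).lt_of_ne' (hz τ hτ), hle τ hτ⟩
        exact stmt5_core T K x xb C hx hxb hC0 hCint hK hineq 0 b le_rfl hb.1
          (le_trans hb.2 ht.2) hposall
  -- key number: exp(-(exp K)) ^ y = exp (-1)
  have hpow : Real.exp (-(Real.exp K)) ^ y = Real.exp (-1) := by
    rw [← Real.exp_mul]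
    congr 1
    rw [hydef, neg_mul, ← Real.exp_add, add_neg_cancel, Real.exp_zero]
  have hee : Real.exp 1 * Real.exp (-1) = 1 := by
    rw [← Real.exp_add]; norm_num
  by_cases hcase : Real.exp (-(Real.exp K)) ≤ ‖x 0 - xb 0‖
  · have h1 : Real.exp (-1) ≤ ‖x 0 - xb 0‖ ^ y := by
      rw [← hpow]
      exact Real.rpow_le_rpow (Real.exp_pos _).le hcase hy.le
    calc ‖x t - xb t‖ ≤ 1 := hNt1
      _ = Real.exp 1 * Real.exp (-1) := hee.symm
      _ ≤ Real.exp 1 * ‖x 0 - xb 0‖ ^ y :=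
        mul_le_mul_of_nonneg_left h1 (Real.exp_pos 1).le
  · push_neg at hcase
    have hN01 : ‖x 0 - xb 0‖ < 1 := by
      have : Real.exp (-(Real.exp K)) < Real.exp 0 :=
        Real.exp_lt_exp.mpr (neg_lt_zero.mpr (Real.exp_pos K))
      rw [Real.exp_zero] at this
      linarith
    have hstrict : ‖x 0 - xb 0‖ ^ y < Real.exp (-1) := by
      rcases eq_or_lt_of_le (norm_nonneg (x 0 - xb 0)) with h00 | h00
      · rw [← h00, Real.zero_rpow hy.ne']; positivity
      · calc ‖x 0 - xb 0‖ ^ y < Real.exp (-(Real.exp K)) ^ y :=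
            Real.rpow_lt_rpow (norm_nonneg _) hcase hy
          _ = Real.exp (-1) := hpow
    have hall : ∀ τ ∈ Set.Icc (0:ℝ) t, ‖x τ - xb τ‖ ≤ 1 := by
      by_contra hcon
      push_neg at hcon
      obtain ⟨τ0, hτ0, hτ0gt⟩ := hcon
      set A := Set.Icc (0:ℝ) t ∩ {τ | 1 ≤ ‖x τ - xb τ‖} with hAdef
      have hAcomp : IsCompact A :=
        isCompact_Icc.inter_right (isClosed_le continuous_const hNcont)
      have hAne : A.Nonempty := ⟨τ0, hτ0, hτ0gt.le⟩
      set s := sInf A with hsdef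
      have hsA : s ∈ A := hAcomp.sInf_mem hAne
      have hNs : 1 ≤ ‖x s - xb s‖ := hsA.2
      have hs0 : 0 < s := by
        rcases lt_or_eq_of_le hsA.1.1 with h | h
        · exact h
        · exfalso; rw [← h] at hNs; linarith
      have hlt : ∀ τ ∈ Set.Ico (0:ℝ) s, ‖x τ - xb τ‖ < 1 := by
        intro τ hτ
        by_contra hc
        push_neg at hc
        have hτA : τ ∈ A := ⟨⟨hτ.1, le_trans hτ.2.le hsA.1.2⟩, hc⟩
        have := csInf_le hAcomp.bddBelow hτA
        linarith [hτ.2]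
      have hNs1 : ‖x s - xb s‖ ≤ 1 := by
        refine le_of_tendsto ((hNcont.tendsto s).mono_left
          (nhdsWithin_le_nhds : 𝓝[<] s ≤ 𝓝 s)) ?_
        exact Filter.eventually_of_mem (Ico_mem_nhdsLT_of_mem ⟨hs0, le_rfl⟩)
          (fun τ hτ => (hlt τ hτ).le)
      have hles : ∀ τ ∈ Set.Icc (0:ℝ) s, ‖x τ - xb τ‖ ≤ 1 := by
        intro τ hτ
        rcases lt_or_eq_of_le hτ.2 with h | h
        · exact (hlt τ ⟨hτ.1, h⟩).le
        · rw [h]; exact hNs1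
      have hstar := star s hsA.1 hles
      have : Real.exp 1 * ‖x 0 - xb 0‖ ^ y < Real.exp 1 * Real.exp (-1) :=
        mul_lt_mul_of_pos_left hstrict (Real.exp_pos 1)
      linarith
    exact star t ⟨ht.1, le_rfl⟩ hall
end

section
/- Let μ, λ > 0, ρ₁, ρ₂, ρ̃ > 0 with ρ₁ ≤ ρ̃ ≤ ρ₂, let P be continuous and strictly increasing on (0,∞), and let g : [0,T] → ℝ (representing t ↦ ρ(x(t),t)) be a positive C¹ function satisfying (μ+λ) d/dt[log g(t) − log ρ̃] + P(g(t)) − P(ρ̃) = −F(t) with g(0) ∈ [ρ₁, ρ₂], where F : [0,T] → ℝ is continuous and satisfies |∫_{t₀}^{t₁} F(τ)dτ| ≤ ε for all 0 ≤ t₀ ≤ t₁ ≤ T. If ε is small enough (depending only on μ, λ, ρ₁, ρ₂, ρ̃, P), then ρ₁/2 ≤ g(t) ≤ 2ρ₂ for all t ∈ [0,T]. -/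
/-- Maximum-principle bound for the density along particle trajectories: if the time
integrals of the effective viscous flux are uniformly small, the density stays in
`[ρ₁/2, 2ρ₂]`. The smallness threshold `ε` depends only on `μ, λ, ρ₁, ρ₂, ρ̃, P`. -/
theorem stmt15 (μ lam ρ₁ ρ₂ ρt : ℝ) (hμ : 0 < μ) (hlam : 0 < lam)
    (hρ₁ : 0 < ρ₁) (h₁t : ρ₁ ≤ ρt) (ht₂ : ρt ≤ ρ₂)
    (P : ℝ → ℝ) (hPmono : StrictMonoOn P (Set.Ioi 0))
    (hPcont : ContinuousOn P (Set.Ioi 0)) :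
    ∃ ε : ℝ, 0 < ε ∧
      ∀ (T : ℝ), 0 < T → ∀ (g F : ℝ → ℝ),
        ContDiff ℝ 1 g → (∀ t, 0 < g t) →
        Continuous F →
        (∀ t ∈ Set.Icc (0:ℝ) T,
          HasDerivAt (fun τ => (μ + lam) * (Real.log (g τ) - Real.log ρt))
            (-(F t) - (P (g t) - P ρt)) t) →
        g 0 ∈ Set.Icc ρ₁ ρ₂ →
        (∀ t₀ t₁ : ℝ, 0 ≤ t₀ → t₀ ≤ t₁ → t₁ ≤ T → |∫ τ in t₀..t₁, F τ| ≤ ε) →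
        ∀ t ∈ Set.Icc (0:ℝ) T, ρ₁ / 2 ≤ g t ∧ g t ≤ 2 * ρ₂ := by
  have hρ₂ : 0 < ρ₂ := lt_of_lt_of_le hρ₁ (le_trans h₁t ht₂)
  have hρt : 0 < ρt := lt_of_lt_of_le hρ₁ h₁t
  have hlog43 : 0 < Real.log (4/3) := Real.log_pos (by norm_num)
  refine ⟨(μ + lam) * Real.log (4/3) / 2, by positivity, ?_⟩
  intro T hT g F hg hgpos hF hderiv hg0 hFint t htT
  set ε : ℝ := (μ + lam) * Real.log (4/3) / 2 with hε
  have hεpos : 0 < ε := by positivity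
  have hPg : Continuous fun τ => P (g τ) := by
    rw [← continuousOn_univ]
    exact hPcont.comp hg.continuous.continuousOn (fun x _ => hgpos x)
  have hcontP : Continuous fun τ => P (g τ) - P ρt := hPg.sub continuous_const
  have key : ∀ t₀ t₁ : ℝ, 0 ≤ t₀ → t₀ ≤ t₁ → t₁ ≤ T →
      (μ + lam) * (Real.log (g t₁) - Real.log ρt)
        - (μ + lam) * (Real.log (g t₀) - Real.log ρt)
      = (-∫ τ in t₀..t₁, F τ) - ∫ τ in t₀..t₁, (P (g τ) - P ρt) := by
    intro t₀ t₁ h0 h01 h1T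
    have hsub : Set.uIcc t₀ t₁ ⊆ Set.Icc (0:ℝ) T := by
      rw [Set.uIcc_of_le h01]
      exact Set.Icc_subset_Icc h0 h1T
    have hftc := intervalIntegral.integral_eq_sub_of_hasDerivAt
      (f := fun τ => (μ + lam) * (Real.log (g τ) - Real.log ρt))
      (f' := fun τ => -(F τ) - (P (g τ) - P ρt))
      (fun x hx => hderiv x (hsub hx))
      (((hF.neg).sub hcontP).intervalIntegrable t₀ t₁)
    rw [← hftc]
    rw [intervalIntegral.integral_sub (f := fun τ => -(F τ)) ((hF.neg).intervalIntegrable t₀ t₁)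
        (hcontP.intervalIntegrable t₀ t₁), intervalIntegral.integral_neg]
  -- monotonicity of P, non-strict
  have hPmono' := hPmono.monotoneOn
  constructor
  · -- lower bound
    by_contra hcon
    push_neg at hcon
    set t₁ := t with ht₁
    set S : Set ℝ := Set.Icc 0 t₁ ∩ g ⁻¹' (Set.Ici (2/3 * ρ₁)) with hS
    have hScpt : IsCompact S :=
      isCompact_Icc.inter_right (isClosed_Ici.preimage hg.continuous)
    have h0S : (0:ℝ) ∈ S := by
      refine ⟨⟨le_refl 0, htT.1⟩, ?_⟩
      have := hg0.1
      simp only [Set.mem_preimage, Set.mem_Ici]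
      linarith
    set t₀ := sSup S with ht₀
    have ht₀S : t₀ ∈ S := hScpt.sSup_mem ⟨0, h0S⟩
    have h0t₀ : 0 ≤ t₀ := ht₀S.1.1
    have ht₀1 : t₀ ≤ t₁ := ht₀S.1.2
    have hgt₀ : 2/3 * ρ₁ ≤ g t₀ := ht₀S.2
    have ht₀lt : t₀ < t₁ := by
      rcases lt_or_eq_of_le ht₀1 with h | h
      · exact h
      · exfalso
        have := hgt₀
        rw [h] at this
        linarith
    have hIoc : ∀ s ∈ Set.Ioc t₀ t₁, g s < 2/3 * ρ₁ := by
      intro s hs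
      by_contra hc
      push_neg at hc
      have hsS : s ∈ S := ⟨⟨le_trans h0t₀ hs.1.le, hs.2⟩, hc⟩
      have : s ≤ t₀ := le_csSup (hScpt.bddAbove) hsS
      exact absurd this (not_le.mpr hs.1)
    -- g t₀ ≤ 2/3 ρ₁ by right limit
    have hgt₀le : g t₀ ≤ 2/3 * ρ₁ := by
      have htd : Filter.Tendsto g (nhdsWithin t₀ (Set.Ioi t₀)) (nhds (g t₀)) :=
        (hg.continuous.continuousAt).tendsto.mono_left nhdsWithin_le_nhds
      refine le_of_tendsto htd ?_
      filter_upwards [Ioc_mem_nhdsGT_of_mem ⟨le_refl t₀, ht₀lt⟩] with s hs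
      exact (hIoc s hs).le
    have hgub : ∀ u ∈ Set.Icc t₀ t₁, g u ≤ 2/3 * ρ₁ := by
      intro u hu
      rcases eq_or_lt_of_le hu.1 with h | h
      · rw [← h]; exact hgt₀le
      · exact (hIoc u ⟨h, hu.2⟩).le
    have hIP : (∫ τ in t₀..t₁, (P (g τ) - P ρt)) ≤ 0 := by
      have := intervalIntegral.integral_nonneg (μ := MeasureTheory.volume) (f := fun τ => P ρt - P (g τ)) ht₀1
        (fun u hu => by
          have hgu := hgub u hu
          have : g u ≤ ρt := by linarith
          have := hPmono' (Set.mem_Ioi.mpr (hgpos u)) (Set.mem_Ioi.mpr hρt) this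
          show (0:ℝ) ≤ P ρt - P (g u)
          linarith)
      have hsplit : (∫ τ in t₀..t₁, (P ρt - P (g τ)))
          = - ∫ τ in t₀..t₁, (P (g τ) - P ρt) := by
        rw [← intervalIntegral.integral_neg]
        congr 1; funext τ; ring
      rw [hsplit] at this
      linarith
    have hIF : |∫ τ in t₀..t₁, F τ| ≤ ε := hFint t₀ t₁ h0t₀ ht₀1 (le_trans htT.2 (le_refl T)) |>.trans (le_refl _)
    have hkey := key t₀ t₁ h0t₀ ht₀1 htT.2
    have habs := abs_le.mp hIF
    have hlog1 : Real.log (g t₁) < Real.log (ρ₁ / 2) :=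
      Real.log_lt_log (hgpos t₁) hcon
    have hlog0 : Real.log (2/3 * ρ₁) ≤ Real.log (g t₀) := by
      rcases eq_or_lt_of_le hgt₀ with h | h
      · rw [h]
      · exact (Real.log_lt_log (by positivity) h).le
    have hgap : Real.log (ρ₁ / 2) - Real.log (2/3 * ρ₁) = - Real.log (4/3) := by
      rw [← Real.log_div (by positivity) (by positivity)]
      have : (ρ₁ / 2) / (2/3 * ρ₁) = 3/4 := by
        field_simp; ring
      rw [this, show (3:ℝ)/4 = (4/3)⁻¹ by norm_num, Real.log_inv]
    have hmul : (μ + lam) * (Real.log (g t₁) - Real.log (g t₀))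
        < (μ + lam) * (- Real.log (4/3)) := by
      apply mul_lt_mul_of_pos_left _ (by linarith)
      linarith
    have : (μ + lam) * (Real.log (g t₁) - Real.log ρt)
        - (μ + lam) * (Real.log (g t₀) - Real.log ρt)
        = (μ + lam) * (Real.log (g t₁) - Real.log (g t₀)) := by ring
    rw [this] at hkey
    have hε2 : (μ + lam) * (- Real.log (4/3)) = -(2*ε) := by rw [hε]; ring
    linarith [hkey, habs.1, habs.2]
  · -- upper bound
    by_contra hcon
    push_neg at hcon
    set t₁ := t with ht₁
    set S : Set ℝ := Set.Icc 0 t₁ ∩ g ⁻¹' (Set.Iic (3/2 * ρ₂)) with hS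
    have hScpt : IsCompact S :=
      isCompact_Icc.inter_right (isClosed_Iic.preimage hg.continuous)
    have h0S : (0:ℝ) ∈ S := by
      refine ⟨⟨le_refl 0, htT.1⟩, ?_⟩
      have := hg0.2
      simp only [Set.mem_preimage, Set.mem_Iic]
      linarith
    set t₀ := sSup S with ht₀
    have ht₀S : t₀ ∈ S := hScpt.sSup_mem ⟨0, h0S⟩
    have h0t₀ : 0 ≤ t₀ := ht₀S.1.1
    have ht₀1 : t₀ ≤ t₁ := ht₀S.1.2
    have hgt₀ : g t₀ ≤ 3/2 * ρ₂ := ht₀S.2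
    have ht₀lt : t₀ < t₁ := by
      rcases lt_or_eq_of_le ht₀1 with h | h
      · exact h
      · exfalso
        have := hgt₀
        rw [h] at this
        linarith
    have hIoc : ∀ s ∈ Set.Ioc t₀ t₁, 3/2 * ρ₂ < g s := by
      intro s hs
      by_contra hc
      push_neg at hc
      have hsS : s ∈ S := ⟨⟨le_trans h0t₀ hs.1.le, hs.2⟩, hc⟩
      have : s ≤ t₀ := le_csSup (hScpt.bddAbove) hsS
      exact absurd this (not_le.mpr hs.1)
    have hgt₀ge : 3/2 * ρ₂ ≤ g t₀ := by
      have htd : Filter.Tendsto g (nhdsWithin t₀ (Set.Ioi t₀)) (nhds (g t₀)) :=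
        (hg.continuous.continuousAt).tendsto.mono_left nhdsWithin_le_nhds
      refine ge_of_tendsto htd ?_
      filter_upwards [Ioc_mem_nhdsGT_of_mem ⟨le_refl t₀, ht₀lt⟩] with s hs
      exact (hIoc s hs).le
    have hglb : ∀ u ∈ Set.Icc t₀ t₁, 3/2 * ρ₂ ≤ g u := by
      intro u hu
      rcases eq_or_lt_of_le hu.1 with h | h
      · rw [← h]; exact hgt₀ge
      · exact (hIoc u ⟨h, hu.2⟩).le
    have hIP : 0 ≤ (∫ τ in t₀..t₁, (P (g τ) - P ρt)) := by
      refine intervalIntegral.integral_nonneg ht₀1 (fun u hu => ?_)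
      have hgu := hglb u hu
      have : ρt ≤ g u := by linarith
      have := hPmono' (Set.mem_Ioi.mpr hρt) (Set.mem_Ioi.mpr (hgpos u)) this
      show (0:ℝ) ≤ P (g u) - P ρt
      linarith
    have hIF : |∫ τ in t₀..t₁, F τ| ≤ ε := hFint t₀ t₁ h0t₀ ht₀1 htT.2
    have hkey := key t₀ t₁ h0t₀ ht₀1 htT.2
    have habs := abs_le.mp hIF
    have hlog1 : Real.log (2 * ρ₂) < Real.log (g t₁) :=
      Real.log_lt_log (by positivity) hcon
    have hlog0 : Real.log (g t₀) ≤ Real.log (3/2 * ρ₂) := by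
      rcases eq_or_lt_of_le hgt₀ with h | h
      · rw [h]
      · exact (Real.log_lt_log (hgpos t₀) h).le
    have hgap : Real.log (2 * ρ₂) - Real.log (3/2 * ρ₂) = Real.log (4/3) := by
      rw [← Real.log_div (by positivity) (by positivity)]
      congr 1
      field_simp; ring
    have hmul : (μ + lam) * Real.log (4/3)
        < (μ + lam) * (Real.log (g t₁) - Real.log (g t₀)) := by
      apply mul_lt_mul_of_pos_left _ (by linarith)
      linarith
    have : (μ + lam) * (Real.log (g t₁) - Real.log ρt)
        - (μ + lam) * (Real.log (g t₀) - Real.log ρt)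
        = (μ + lam) * (Real.log (g t₁) - Real.log (g t₀)) := by ring
    rw [this] at hkey
    have hε2 : (μ + lam) * Real.log (4/3) = 2*ε := by rw [hε]; ring
    linarith [hkey, habs.1, habs.2]
end
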